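/- Let m, m̃ be nonzero real constants with m·m̃ = 1, and set η = (m + m̃)/2 and ρ = (m − m̃)/2. Let F(u, w, w̃) be a smooth real-valued function on an open set U ⊆ ℝ³. On the open set V = {(w, z, w̃, z̃) : z > 0, z̃ > 0, ((ln z)/(2m) − (ln z̃)/(2m̃), w, w̃) ∈ U}, define t = (ln z)/(2m) + (ln z̃)/(2m̃), u = (ln z)/(2m) − (ln z̃)/(2m̃), and Ω(w, z, w̃, z̃) = e^{ηt} F(u, w, w̃). Then Ω satisfies the first heavenly equation Ω_{wz̃}Ω_{zw̃} − Ω_{ww̃}Ω_{zz̃} = 1 everywhere on V if and only if F satisfies (η F_{w̃} + F_{uw̃})(η F_w − F_{uw}) − (η²F − F_{uu}) F_{ww̃} = 4 e^{2ρu} everywhere on U. -/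

import Mathlib

noncomputable section

/-- Partial derivatives of F(u, w, w̃) in its three arguments. -/
def pu (F : ℝ → ℝ → ℝ → ℝ) : ℝ → ℝ → ℝ → ℝ := fun u w wt => deriv (fun s => F s w wt) u
def pw (F : ℝ → ℝ → ℝ → ℝ) : ℝ → ℝ → ℝ → ℝ := fun u w wt => deriv (fun s => F u s wt) w
def pwt (F : ℝ → ℝ → ℝ → ℝ) : ℝ → ℝ → ℝ → ℝ := fun u w wt => deriv (fun s => F u w s) wt

/-- Partial derivatives of Ω(w, z, w̃, z̃) in its four arguments. -/
def qw (Ω : ℝ → ℝ → ℝ → ℝ → ℝ) : ℝ → ℝ → ℝ → ℝ → ℝ :=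
  fun w z wt zt => deriv (fun s => Ω s z wt zt) w
def qz (Ω : ℝ → ℝ → ℝ → ℝ → ℝ) : ℝ → ℝ → ℝ → ℝ → ℝ :=
  fun w z wt zt => deriv (fun s => Ω w s wt zt) z
def qwt (Ω : ℝ → ℝ → ℝ → ℝ → ℝ) : ℝ → ℝ → ℝ → ℝ → ℝ :=
  fun w z wt zt => deriv (fun s => Ω w z s zt) wt
def qzt (Ω : ℝ → ℝ → ℝ → ℝ → ℝ) : ℝ → ℝ → ℝ → ℝ → ℝ :=
  fun w z wt zt => deriv (fun s => Ω w z wt s) zt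

private lemma slice1 {g : ℝ × ℝ × ℝ → ℝ} {g' : ℝ × ℝ × ℝ →L[ℝ] ℝ} {u w wt : ℝ}
    (hg : HasFDerivAt g g' (u, w, wt)) :
    HasDerivAt (fun s => g (s, w, wt)) (g' (1, 0, 0)) u := by
  have h : HasDerivAt (fun s : ℝ => ((s, w, wt) : ℝ × ℝ × ℝ)) (1, 0, 0) u :=
    (hasDerivAt_id u).prodMk ((hasDerivAt_const u w).prodMk (hasDerivAt_const u wt))
  exact hg.comp_hasDerivAt u h

private lemma slice2 {g : ℝ × ℝ × ℝ → ℝ} {g' : ℝ × ℝ × ℝ →L[ℝ] ℝ} {u w wt : ℝ}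
    (hg : HasFDerivAt g g' (u, w, wt)) :
    HasDerivAt (fun s => g (u, s, wt)) (g' (0, 1, 0)) w := by
  have h : HasDerivAt (fun s : ℝ => ((u, s, wt) : ℝ × ℝ × ℝ)) (0, 1, 0) w :=
    (hasDerivAt_const w u).prodMk ((hasDerivAt_id w).prodMk (hasDerivAt_const w wt))
  exact hg.comp_hasDerivAt w h

private lemma slice3 {g : ℝ × ℝ × ℝ → ℝ} {g' : ℝ × ℝ × ℝ →L[ℝ] ℝ} {u w wt : ℝ}
    (hg : HasFDerivAt g g' (u, w, wt)) :
    HasDerivAt (fun s => g (u, w, s)) (g' (0, 0, 1)) wt := by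
  have h : HasDerivAt (fun s : ℝ => ((u, w, s) : ℝ × ℝ × ℝ)) (0, 0, 1) wt :=
    (hasDerivAt_const wt u).prodMk ((hasDerivAt_const wt w).prodMk (hasDerivAt_id wt))
  exact hg.comp_hasDerivAt wt h

private lemma clm_apply_fderiv {f : ℝ × ℝ × ℝ → ℝ} {p : ℝ × ℝ × ℝ}
    (h : DifferentiableAt ℝ (fderiv ℝ f) p) (v : ℝ × ℝ × ℝ) :
    HasFDerivAt (fun q => fderiv ℝ f q v)
      ((ContinuousLinearMap.apply ℝ ℝ v).comp (fderiv ℝ (fderiv ℝ f) p)) p :=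
  (ContinuousLinearMap.apply ℝ ℝ v).hasFDerivAt.comp p h.hasFDerivAt

private lemma comp_apply_eq {S : (ℝ × ℝ × ℝ) →L[ℝ] ((ℝ × ℝ × ℝ) →L[ℝ] ℝ)}
    (v w : ℝ × ℝ × ℝ) :
    ((ContinuousLinearMap.apply ℝ ℝ v).comp S) w = S w v := rfl

private lemma mixed_symm {f : ℝ × ℝ × ℝ → ℝ} {p : ℝ × ℝ × ℝ}
    (hf : ∀ᶠ q in nhds p, ContDiffAt ℝ (⊤ : ℕ∞) f q) (v w : ℝ × ℝ × ℝ) :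
    fderiv ℝ (fderiv ℝ f) p v w = fderiv ℝ (fderiv ℝ f) p w v := by
  have hself : ContDiffAt ℝ (⊤ : ℕ∞) f p := hf.self_of_nhds
  have h' : HasFDerivAt (fderiv ℝ f) (fderiv ℝ (fderiv ℝ f) p) p :=
    ((hself.fderiv_right (m := (⊤ : ℕ∞)) (by simp)).differentiableAt (by simp)).hasFDerivAt
  have hev : ∀ᶠ q in nhds p, HasFDerivAt f (fderiv ℝ f q) q := by
    filter_upwards [hf] with q hq using (hq.differentiableAt (by simp)).hasFDerivAt
  exact second_derivative_symmetric_of_eventually hev h' v w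

/-- With m·m̃ = 1, η = (m+m̃)/2, ρ = (m−m̃)/2,
t = (ln z)/(2m) + (ln z̃)/(2m̃), u = (ln z)/(2m) − (ln z̃)/(2m̃) and Ω = e^{ηt} F(u, w, w̃),
the first heavenly equation Ω_{wz̃}Ω_{zw̃} − Ω_{ww̃}Ω_{zz̃} = 1 holds on V iff
(η F_{w̃} + F_{uw̃})(η F_w − F_{uw}) − (η²F − F_{uu}) F_{ww̃} = 4 e^{2ρu} holds on U. -/
theorem heavenly_iff_EWred (m mt : ℝ) (hm : m ≠ 0) (hmt : mt ≠ 0) (hmmt : m * mt = 1)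
    (η ρ : ℝ) (hη : η = (m + mt) / 2) (hρ : ρ = (m - mt) / 2)
    (U : Set (ℝ × ℝ × ℝ)) (hU : IsOpen U)
    (F : ℝ → ℝ → ℝ → ℝ)
    (hF : ContDiffOn ℝ (⊤ : ℕ∞) (fun p : ℝ × ℝ × ℝ => F p.1 p.2.1 p.2.2) U)
    (Ω : ℝ → ℝ → ℝ → ℝ → ℝ)
    (hΩ : ∀ w z wt zt : ℝ, Ω w z wt zt =
      Real.exp (η * (Real.log z / (2 * m) + Real.log zt / (2 * mt))) *
        F (Real.log z / (2 * m) - Real.log zt / (2 * mt)) w wt) :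
    (∀ w z wt zt : ℝ, 0 < z → 0 < zt →
        (Real.log z / (2 * m) - Real.log zt / (2 * mt), w, wt) ∈ U →
        qw (qzt Ω) w z wt zt * qz (qwt Ω) w z wt zt
          - qw (qwt Ω) w z wt zt * qz (qzt Ω) w z wt zt = 1)
    ↔ (∀ u w wt : ℝ, (u, w, wt) ∈ U →
        (η * pwt F u w wt + pwt (pu F) u w wt) * (η * pw F u w wt - pw (pu F) u w wt)
          - (η ^ 2 * F u w wt - pu (pu F) u w wt) * pwt (pw F) u w wt
          = 4 * Real.exp (2 * ρ * u)) := by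
  set f : ℝ × ℝ × ℝ → ℝ := fun q => F q.1 q.2.1 q.2.2 with hfdef
  have hsm : ∀ q ∈ U, ContDiffAt ℝ (⊤ : ℕ∞) f q := fun q hq => hF.contDiffAt (hU.mem_nhds hq)
  have hd : ∀ q ∈ U, DifferentiableAt ℝ f q := fun q hq => (hsm q hq).differentiableAt (by simp)
  have hd' : ∀ q ∈ U, DifferentiableAt ℝ (fderiv ℝ f) q := fun q hq =>
    ((hsm q hq).fderiv_right (m := (⊤ : ℕ∞)) (by simp)).differentiableAt (by simp)
  have key : ∀ w z wt zt : ℝ, 0 < z → 0 < zt →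
      (Real.log z / (2 * m) - Real.log zt / (2 * mt), w, wt) ∈ U →
      qw (qzt Ω) w z wt zt * qz (qwt Ω) w z wt zt
        - qw (qwt Ω) w z wt zt * qz (qzt Ω) w z wt zt
      = Real.exp (-(2 * ρ * (Real.log z / (2 * m) - Real.log zt / (2 * mt)))) / 4 *
        ((η * pwt F (Real.log z / (2 * m) - Real.log zt / (2 * mt)) w wt
            + pwt (pu F) (Real.log z / (2 * m) - Real.log zt / (2 * mt)) w wt) *
          (η * pw F (Real.log z / (2 * m) - Real.log zt / (2 * mt)) w wt
            - pw (pu F) (Real.log z / (2 * m) - Real.log zt / (2 * mt)) w wt)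
          - (η ^ 2 * F (Real.log z / (2 * m) - Real.log zt / (2 * mt)) w wt
            - pu (pu F) (Real.log z / (2 * m) - Real.log zt / (2 * mt)) w wt) *
            pwt (pw F) (Real.log z / (2 * m) - Real.log zt / (2 * mt)) w wt) := by
    intro w z wt zt hz hzt hp
    set u : ℝ := Real.log z / (2 * m) - Real.log zt / (2 * mt) with hu
    set X : ℝ := Real.exp (η * (Real.log z / (2 * m) + Real.log zt / (2 * mt))) with hX
    have hC := hsm (u, w, wt) hp
    have hdp : DifferentiableAt ℝ f (u, w, wt) := hd _ hp
    have hdp' : DifferentiableAt ℝ (fderiv ℝ f) (u, w, wt) := hd' _ hp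
    have hfd : HasFDerivAt f (fderiv ℝ f (u, w, wt)) (u, w, wt) := hdp.hasFDerivAt
    have hD1 := clm_apply_fderiv hdp' ((1 : ℝ), 0, 0)
    have hD2 := clm_apply_fderiv hdp' ((0 : ℝ), 1, 0)
    have hD3 := clm_apply_fderiv hdp' ((0 : ℝ), 0, 1)
    set S := fderiv ℝ (fderiv ℝ f) (u, w, wt) with hS
    -- eventual membership facts
    have hmemw : ∀ᶠ s in nhds w, ((u, s, wt) : ℝ × ℝ × ℝ) ∈ U := by
      have hct : ContinuousAt (fun s : ℝ => ((u, s, wt) : ℝ × ℝ × ℝ)) w :=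
        continuousAt_const.prodMk (continuousAt_id.prodMk continuousAt_const)
      exact hct.preimage_mem_nhds (hU.mem_nhds hp)
    have hmemwt : ∀ᶠ s in nhds wt, ((u, w, s) : ℝ × ℝ × ℝ) ∈ U := by
      have hct : ContinuousAt (fun s : ℝ => ((u, w, s) : ℝ × ℝ × ℝ)) wt :=
        continuousAt_const.prodMk (continuousAt_const.prodMk continuousAt_id)
      exact hct.preimage_mem_nhds (hU.mem_nhds hp)
    have hmemu : ∀ᶠ s in nhds u, ((s, w, wt) : ℝ × ℝ × ℝ) ∈ U := by
      have hct : ContinuousAt (fun s : ℝ => ((s, w, wt) : ℝ × ℝ × ℝ)) u :=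
        continuousAt_id.prodMk (continuousAt_const.prodMk continuousAt_const)
      exact hct.preimage_mem_nhds (hU.mem_nhds hp)
    have hmemz : ∀ᶠ z' in nhds z, 0 < z' ∧
        ((Real.log z' / (2 * m) - Real.log zt / (2 * mt), w, wt) : ℝ × ℝ × ℝ) ∈ U := by
      have h1 : ∀ᶠ z' in nhds z, 0 < z' := eventually_gt_nhds hz
      have hct : ContinuousAt
          (fun z' : ℝ => ((Real.log z' / (2 * m) - Real.log zt / (2 * mt), w, wt) : ℝ × ℝ × ℝ)) z := by
        have hlog : ContinuousAt (fun z' : ℝ => Real.log z' / (2 * m) - Real.log zt / (2 * mt)) z :=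
          (((Real.continuousAt_log hz.ne').div_const (2 * m)).sub continuousAt_const)
        exact hlog.prodMk (continuousAt_const.prodMk continuousAt_const)
      exact h1.and (hct.preimage_mem_nhds (hU.mem_nhds hp))
    -- first-derivative formulas
    have FORMzt : ∀ s z' : ℝ, 0 < z' →
        ((Real.log z' / (2 * m) - Real.log zt / (2 * mt), s, wt) : ℝ × ℝ × ℝ) ∈ U →
        qzt Ω s z' wt zt = Real.exp (η * (Real.log z' / (2 * m) + Real.log zt / (2 * mt))) *
          (1 / (2 * mt) / zt *
            (η * f (Real.log z' / (2 * m) - Real.log zt / (2 * mt), s, wt)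
              - fderiv ℝ f (Real.log z' / (2 * m) - Real.log zt / (2 * mt), s, wt) (1, 0, 0))) := by
      intro s z' hz' hmem
      have hlog : HasDerivAt (fun r : ℝ => Real.log r / (2 * mt)) (zt⁻¹ / (2 * mt)) zt :=
        (Real.hasDerivAt_log hzt.ne').div_const _
      have hA : HasDerivAt
          (fun r : ℝ => Real.exp (η * (Real.log z' / (2 * m) + Real.log r / (2 * mt))))
          (Real.exp (η * (Real.log z' / (2 * m) + Real.log zt / (2 * mt)))
            * (η * (0 + zt⁻¹ / (2 * mt)))) zt :=
        (((hasDerivAt_const zt (Real.log z' / (2 * m))).add hlog).const_mul η).exp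
      have hB : HasDerivAt
          (fun r : ℝ => f (Real.log z' / (2 * m) - Real.log r / (2 * mt), s, wt))
          (fderiv ℝ f (Real.log z' / (2 * m) - Real.log zt / (2 * mt), s, wt) (1, 0, 0)
            * (0 - zt⁻¹ / (2 * mt))) zt :=
        (slice1 (hd _ hmem).hasFDerivAt).comp zt (h := fun r : ℝ => Real.log z' / (2 * m) - Real.log r / (2 * mt))
          ((hasDerivAt_const zt (Real.log z' / (2 * m))).sub hlog)
      have hfun : (fun r : ℝ => Ω s z' wt r) =
          fun r : ℝ => Real.exp (η * (Real.log z' / (2 * m) + Real.log r / (2 * mt))) *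
            f (Real.log z' / (2 * m) - Real.log r / (2 * mt), s, wt) :=
        funext fun r => hΩ s z' wt r
      show deriv (fun r : ℝ => Ω s z' wt r) zt = _
      rw [hfun]
      refine (hA.mul hB).deriv.trans ?_
      ring
    have FORMwt : ∀ s z' : ℝ, 0 < z' →
        ((Real.log z' / (2 * m) - Real.log zt / (2 * mt), s, wt) : ℝ × ℝ × ℝ) ∈ U →
        qwt Ω s z' wt zt = Real.exp (η * (Real.log z' / (2 * m) + Real.log zt / (2 * mt))) *
          fderiv ℝ f (Real.log z' / (2 * m) - Real.log zt / (2 * mt), s, wt) (0, 0, 1) := by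
      intro s z' hz' hmem
      have hfun : (fun r : ℝ => Ω s z' r zt) =
          fun r : ℝ => Real.exp (η * (Real.log z' / (2 * m) + Real.log zt / (2 * mt))) *
            f (Real.log z' / (2 * m) - Real.log zt / (2 * mt), s, r) :=
        funext fun r => hΩ s z' r zt
      show deriv (fun r : ℝ => Ω s z' r zt) wt = _
      rw [hfun]
      exact ((slice3 (hd _ hmem).hasFDerivAt).const_mul _).deriv
    -- second derivatives of Ω
    have hlz : HasDerivAt (fun z' : ℝ => Real.log z' / (2 * m)) (z⁻¹ / (2 * m)) z :=
      (Real.hasDerivAt_log hz.ne').div_const _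
    have hexp : HasDerivAt
        (fun z' : ℝ => Real.exp (η * (Real.log z' / (2 * m) + Real.log zt / (2 * mt))))
        (X * (η * (z⁻¹ / (2 * m)))) z :=
      ((hlz.add_const _).const_mul η).exp
    have huz : HasDerivAt (fun z' : ℝ => Real.log z' / (2 * m) - Real.log zt / (2 * mt))
        (z⁻¹ / (2 * m)) z := hlz.sub_const _
    have h1 : qw (qzt Ω) w z wt zt
        = X * (1 / (2 * mt) / zt * (η * fderiv ℝ f (u, w, wt) (0, 1, 0) - S (0, 1, 0) (1, 0, 0))) := by
      have hmod : HasDerivAt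
          (fun s : ℝ => X * (1 / (2 * mt) / zt *
            (η * f (u, s, wt) - fderiv ℝ f (u, s, wt) (1, 0, 0))))
          (X * (1 / (2 * mt) / zt *
            (η * fderiv ℝ f (u, w, wt) (0, 1, 0) - S (0, 1, 0) (1, 0, 0)))) w := by
        have := ((((slice2 hfd).const_mul η).sub (slice2 hD1)).const_mul (1 / (2 * mt) / zt)).const_mul X
        rwa [comp_apply_eq] at this
      have heq : (fun s : ℝ => qzt Ω s z wt zt) =ᶠ[nhds w]
          (fun s : ℝ => X * (1 / (2 * mt) / zt *
            (η * f (u, s, wt) - fderiv ℝ f (u, s, wt) (1, 0, 0)))) := by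
        filter_upwards [hmemw] with s hs
        rw [FORMzt s z hz hs]
      exact (hmod.congr_of_eventuallyEq heq).deriv
    have h3 : qw (qwt Ω) w z wt zt = X * S (0, 1, 0) (0, 0, 1) := by
      have hmod : HasDerivAt (fun s : ℝ => X * fderiv ℝ f (u, s, wt) (0, 0, 1))
          (X * S (0, 1, 0) (0, 0, 1)) w := by
        have := (slice2 hD3).const_mul X
        rwa [comp_apply_eq] at this
      have heq : (fun s : ℝ => qwt Ω s z wt zt) =ᶠ[nhds w]
          (fun s : ℝ => X * fderiv ℝ f (u, s, wt) (0, 0, 1)) := by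
        filter_upwards [hmemw] with s hs
        rw [FORMwt s z hz hs]
      exact (hmod.congr_of_eventuallyEq heq).deriv
    have h2 : qz (qwt Ω) w z wt zt
        = X * (η * (z⁻¹ / (2 * m))) * fderiv ℝ f (u, w, wt) (0, 0, 1)
          + X * (S (1, 0, 0) (0, 0, 1) * (z⁻¹ / (2 * m))) := by
      have hmod : HasDerivAt
          (fun z' : ℝ => Real.exp (η * (Real.log z' / (2 * m) + Real.log zt / (2 * mt))) *
            fderiv ℝ f (Real.log z' / (2 * m) - Real.log zt / (2 * mt), w, wt) (0, 0, 1))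
          (X * (η * (z⁻¹ / (2 * m))) * fderiv ℝ f (u, w, wt) (0, 0, 1)
            + X * (S (1, 0, 0) (0, 0, 1) * (z⁻¹ / (2 * m)))) z := by
        have := hexp.mul ((slice1 hD3).comp z huz)
        rwa [comp_apply_eq] at this
      have heq : (fun z' : ℝ => qwt Ω w z' wt zt) =ᶠ[nhds z]
          (fun z' : ℝ => Real.exp (η * (Real.log z' / (2 * m) + Real.log zt / (2 * mt))) *
            fderiv ℝ f (Real.log z' / (2 * m) - Real.log zt / (2 * mt), w, wt) (0, 0, 1)) := by
        filter_upwards [hmemz] with z' hz'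
        rw [FORMwt w z' hz'.1 hz'.2]
      exact (hmod.congr_of_eventuallyEq heq).deriv
    have h4 : qz (qzt Ω) w z wt zt
        = X * (η * (z⁻¹ / (2 * m))) * (1 / (2 * mt) / zt *
            (η * f (u, w, wt) - fderiv ℝ f (u, w, wt) (1, 0, 0)))
          + X * (1 / (2 * mt) / zt *
            (η * (fderiv ℝ f (u, w, wt) (1, 0, 0) * (z⁻¹ / (2 * m)))
              - S (1, 0, 0) (1, 0, 0) * (z⁻¹ / (2 * m)))) := by
      have hmod : HasDerivAt
          (fun z' : ℝ => Real.exp (η * (Real.log z' / (2 * m) + Real.log zt / (2 * mt))) *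
            (1 / (2 * mt) / zt *
              (η * f (Real.log z' / (2 * m) - Real.log zt / (2 * mt), w, wt)
                - fderiv ℝ f (Real.log z' / (2 * m) - Real.log zt / (2 * mt), w, wt) (1, 0, 0))))
          (X * (η * (z⁻¹ / (2 * m))) * (1 / (2 * mt) / zt *
              (η * f (u, w, wt) - fderiv ℝ f (u, w, wt) (1, 0, 0)))
            + X * (1 / (2 * mt) / zt *
              (η * (fderiv ℝ f (u, w, wt) (1, 0, 0) * (z⁻¹ / (2 * m)))
                - S (1, 0, 0) (1, 0, 0) * (z⁻¹ / (2 * m))))) z := by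
        have := hexp.mul (((((slice1 hfd).comp z huz).const_mul η).sub
          ((slice1 hD1).comp z huz)).const_mul (1 / (2 * mt) / zt))
        rwa [comp_apply_eq] at this
      have heq : (fun z' : ℝ => qzt Ω w z' wt zt) =ᶠ[nhds z]
          (fun z' : ℝ => Real.exp (η * (Real.log z' / (2 * m) + Real.log zt / (2 * mt))) *
            (1 / (2 * mt) / zt *
              (η * f (Real.log z' / (2 * m) - Real.log zt / (2 * mt), w, wt)
                - fderiv ℝ f (Real.log z' / (2 * m) - Real.log zt / (2 * mt), w, wt) (1, 0, 0)))) := by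
        filter_upwards [hmemz] with z' hz'
        rw [FORMzt w z' hz'.1 hz'.2]
      exact (hmod.congr_of_eventuallyEq heq).deriv
    -- partial derivatives of F at (u, w, wt)
    have hP2 : pw F u w wt = fderiv ℝ f (u, w, wt) (0, 1, 0) := (slice2 hfd).deriv
    have hP3 : pwt F u w wt = fderiv ℝ f (u, w, wt) (0, 0, 1) := (slice3 hfd).deriv
    have hS11 : pu (pu F) u w wt = S (1, 0, 0) (1, 0, 0) := by
      have hmod : HasDerivAt (fun s : ℝ => fderiv ℝ f (s, w, wt) (1, 0, 0))
          (S (1, 0, 0) (1, 0, 0)) u := by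
        have := slice1 hD1; rwa [comp_apply_eq] at this
      have heq : (fun s : ℝ => pu F s w wt) =ᶠ[nhds u]
          (fun s : ℝ => fderiv ℝ f (s, w, wt) (1, 0, 0)) := by
        filter_upwards [hmemu] with s hs
        exact (slice1 (hd _ hs).hasFDerivAt).deriv
      exact (hmod.congr_of_eventuallyEq heq).deriv
    have hS21 : pw (pu F) u w wt = S (0, 1, 0) (1, 0, 0) := by
      have hmod : HasDerivAt (fun s : ℝ => fderiv ℝ f (u, s, wt) (1, 0, 0))
          (S (0, 1, 0) (1, 0, 0)) w := by
        have := slice2 hD1; rwa [comp_apply_eq] at this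
      have heq : (fun s : ℝ => pu F u s wt) =ᶠ[nhds w]
          (fun s : ℝ => fderiv ℝ f (u, s, wt) (1, 0, 0)) := by
        filter_upwards [hmemw] with s hs
        exact (slice1 (hd _ hs).hasFDerivAt).deriv
      exact (hmod.congr_of_eventuallyEq heq).deriv
    have hS31 : pwt (pu F) u w wt = S (0, 0, 1) (1, 0, 0) := by
      have hmod : HasDerivAt (fun s : ℝ => fderiv ℝ f (u, w, s) (1, 0, 0))
          (S (0, 0, 1) (1, 0, 0)) wt := by
        have := slice3 hD1; rwa [comp_apply_eq] at this
      have heq : (fun s : ℝ => pu F u w s) =ᶠ[nhds wt]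
          (fun s : ℝ => fderiv ℝ f (u, w, s) (1, 0, 0)) := by
        filter_upwards [hmemwt] with s hs
        exact (slice1 (hd _ hs).hasFDerivAt).deriv
      exact (hmod.congr_of_eventuallyEq heq).deriv
    have hS32 : pwt (pw F) u w wt = S (0, 0, 1) (0, 1, 0) := by
      have hmod : HasDerivAt (fun s : ℝ => fderiv ℝ f (u, w, s) (0, 1, 0))
          (S (0, 0, 1) (0, 1, 0)) wt := by
        have := slice3 hD2; rwa [comp_apply_eq] at this
      have heq : (fun s : ℝ => pw F u w s) =ᶠ[nhds wt]
          (fun s : ℝ => fderiv ℝ f (u, w, s) (0, 1, 0)) := by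
        filter_upwards [hmemwt] with s hs
        exact (slice2 (hd _ hs).hasFDerivAt).deriv
      exact (hmod.congr_of_eventuallyEq heq).deriv
    have hsym : ∀ v w' : ℝ × ℝ × ℝ, S v w' = S w' v := by
      intro v w'
      exact mixed_symm (Filter.eventually_of_mem (hU.mem_nhds hp) (fun q hq => hsm q hq)) v w'
    have hFf : F u w wt = f (u, w, wt) := rfl
    -- exponent identity
    have hXX : X * X = Real.exp (-(2 * ρ * u)) * (z * zt) := by
      rw [hX, ← Real.exp_add, ← Real.exp_log hz, ← Real.exp_log hzt, ← Real.exp_add, ← Real.exp_add]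
      congr 1
      rw [hu, hη, hρ]
      simp only [Real.log_exp]
      field_simp
      ring
    have hfin : z⁻¹ / (2 * m) * (1 / (2 * mt) / zt) * (X * X) = Real.exp (-(2 * ρ * u)) / 4 := by
      rw [hXX]
      field_simp
      linear_combination (-4) * hmmt
    rw [h1, h2, h3, h4, hP2, hP3, hS21, hS31, hS32, hS11, hFf, hsym (1, 0, 0) (0, 0, 1), hsym (0, 1, 0) (0, 0, 1)]
    linear_combination
      ((η * fderiv ℝ f (u, w, wt) (0, 0, 1) + S (0, 0, 1) (1, 0, 0)) *
        (η * fderiv ℝ f (u, w, wt) (0, 1, 0) - S (0, 1, 0) (1, 0, 0))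
        - (η ^ 2 * f (u, w, wt) - S (1, 0, 0) (1, 0, 0)) * S (0, 0, 1) (0, 1, 0)) * hfin
  constructor
  · intro h u w wt hp
    have hz : (0 : ℝ) < Real.exp (2 * m * u) := Real.exp_pos _
    have hu1 : Real.log (Real.exp (2 * m * u)) / (2 * m) - Real.log 1 / (2 * mt) = u := by
      rw [Real.log_exp, Real.log_one]
      field_simp
      ring
    have hp' : ((Real.log (Real.exp (2 * m * u)) / (2 * m) - Real.log 1 / (2 * mt), w, wt)
        : ℝ × ℝ × ℝ) ∈ U := by rw [hu1]; exact hp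
    have h2 := h w _ wt 1 hz one_pos hp'
    rw [key w _ wt 1 hz one_pos hp', hu1] at h2
    have h1 : Real.exp (-(2 * ρ * u)) * Real.exp (2 * ρ * u) = 1 := by
      rw [← Real.exp_add]
      simp
    linear_combination (4 * Real.exp (2 * ρ * u)) * h2
      - ((η * pwt F u w wt + pwt (pu F) u w wt) * (η * pw F u w wt - pw (pu F) u w wt)
        - (η ^ 2 * F u w wt - pu (pu F) u w wt) * pwt (pw F) u w wt) * h1
  · intro h w z wt zt hz hzt hp
    rw [key w z wt zt hz hzt hp, h _ w wt hp]
    have h1 : Real.exp (-(2 * ρ * (Real.log z / (2 * m) - Real.log zt / (2 * mt))))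
        * Real.exp (2 * ρ * (Real.log z / (2 * m) - Real.log zt / (2 * mt))) = 1 := by
      rw [← Real.exp_add]
      simp
    linear_combination h1


end
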